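/- Let X be a nonempty set and Y a nonempty subset of X. Every element of the monoid T̄(X,Y) is semi-balanced if and only if X is finite. -/

import Mathlib

/-- `T` is a transversal of the equivalence relation `ker f = {(x,y) : f x = f y}`:
it contains exactly one element of each `ker f`-class. -/
def IsTransversal {X : Type*} (f : X → X) (T : Set X) : Prop :=
  ∀ x : X, ∃! t, t ∈ T ∧ f t = f x

/-- `f` is semi-balanced if its collapse `c(f) = |X \ T|` (for a transversal `T` of `ker f`)
equals its defect `d(f) = |X \ f(X)|`. -/
def SemiBalanced {X : Type*} (f : X → X) : Prop :=
  ∃ T : Set X, IsTransversal f T ∧ Cardinal.mk ↥(Tᶜ) = Cardinal.mk ↥((Set.range f)ᶜ)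

/-- A surjective non-injective map is not semi-balanced. -/
lemma not_semiBalanced_of_surj {X : Type*} {f : X → X} (hsurj : Function.Surjective f)
    {a b : X} (hab : a ≠ b) (hfab : f a = f b) : ¬ SemiBalanced f := by
  rintro ⟨T, hT, hcard⟩
  have h0 : Cardinal.mk ↥((Set.range f)ᶜ : Set X) = 0 := by
    rw [Cardinal.mk_eq_zero_iff, Set.range_eq_univ.2 hsurj]
    simp
  rw [h0, Cardinal.mk_eq_zero_iff] at hcard
  have hall : ∀ x : X, x ∈ T := fun x => by
    by_contra h; exact hcard.false ⟨x, h⟩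
  obtain ⟨t, _, hu⟩ := hT a
  exact hab ((hu a ⟨hall a, rfl⟩).trans (hu b ⟨hall b, hfab.symm⟩).symm)

open Classical in
noncomputable def shiftMap {X : Type*} (e : ℕ → X) : X → X :=
  fun x => if h : ∃ n, x = e (n + 1) then e h.choose else x

lemma shiftMap_succ {X : Type*} {e : ℕ → X} (he : Function.Injective e) (n : ℕ) :
    shiftMap e (e (n + 1)) = e n := by
  classical
  unfold shiftMap
  have h : ∃ m, e (n + 1) = e (m + 1) := ⟨n, rfl⟩
  rw [dif_pos h]
  have h2 : h.choose + 1 = n + 1 := he h.choose_spec.symm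
  exact congrArg e (Nat.succ_injective h2)

lemma shiftMap_of_not_mem {X : Type*} {e : ℕ → X} {x : X} (hx : ∀ n, x ≠ e (n + 1)) :
    shiftMap e x = x := by
  unfold shiftMap
  rw [dif_neg]
  push_neg
  exact hx

lemma shiftMap_zero {X : Type*} {e : ℕ → X} (he : Function.Injective e) :
    shiftMap e (e 0) = e 0 :=
  shiftMap_of_not_mem (fun n h => Nat.succ_ne_zero n (he h.symm))

lemma shiftMap_surj {X : Type*} {e : ℕ → X} (he : Function.Injective e) :
    Function.Surjective (shiftMap e) := by
  intro y
  by_cases h : ∃ n, y = e n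
  · obtain ⟨n, rfl⟩ := h
    exact ⟨e (n + 1), shiftMap_succ he n⟩
  · push_neg at h
    exact ⟨y, shiftMap_of_not_mem fun n => h (n + 1)⟩

lemma shiftMap_mem_range {X : Type*} {e : ℕ → X} (x : X) :
    shiftMap e x = x ∨ shiftMap e x ∈ Set.range e := by
  unfold shiftMap
  by_cases h : ∃ n, x = e (n + 1)
  · rw [dif_pos h]; exact Or.inr ⟨h.choose, rfl⟩
  · rw [dif_neg h]; exact Or.inl rfl

lemma not_sb_shift {X : Type*} {e : ℕ → X} (he : Function.Injective e) :
    ¬ SemiBalanced (shiftMap e) := by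
  apply not_semiBalanced_of_surj (shiftMap_surj he)
    (a := e 0) (b := e 1) (fun h => Nat.zero_ne_one (he h))
  rw [shiftMap_zero he, show (1 : ℕ) = 0 + 1 from rfl, shiftMap_succ he 0]

theorem stmt17 {X : Type*} [Nonempty X] (Y : Set X) (hY : Y.Nonempty) :
    (∀ f : X → X, (∀ x ∈ Y, f x ∈ Y) → SemiBalanced f) ↔ Finite X := by
  constructor
  · intro hall
    by_contra hfin
    rw [not_finite_iff_infinite] at hfin
    -- one of Y, Yᶜ is infinite
    have hYi : Y.Infinite ∨ (Yᶜ : Set X).Infinite := by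
      by_contra h
      push_neg at h
      have : (Y ∪ Yᶜ : Set X).Finite := h.1.union h.2
      rw [Set.union_compl_self] at this
      exact Set.infinite_univ this
    rcases hYi with hi | hi
    · obtain emb := hi.natEmbedding
      set e : ℕ → X := fun n => (emb n : X) with he_def
      have he : Function.Injective e := fun a b h => emb.injective (Subtype.ext h)
      have hrange : ∀ n, e n ∈ Y := fun n => (emb n).2
      apply not_sb_shift he
      apply hall
      intro x hx
      rcases shiftMap_mem_range (e := e) x with h | h
      · rwa [h]
      · obtain ⟨n, hn⟩ := h
        rw [← hn]; exact hrange n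
    · obtain emb := hi.natEmbedding
      set e : ℕ → X := fun n => (emb n : X) with he_def
      have he : Function.Injective e := fun a b h => emb.injective (Subtype.ext h)
      have hrange : ∀ n, e n ∉ Y := fun n => (emb n).2
      apply not_sb_shift he
      apply hall
      intro x hx
      rw [shiftMap_of_not_mem (fun n hn => hrange (n + 1) (by rw [← hn]; exact hx))]
      exact hx
  · intro hfin f _
    -- section of f on its range
    set s : ↥(Set.range f) → X := fun y => y.2.choose with hs_def
    have hs : ∀ y, f (s y) = y := fun y => y.2.choose_spec
    have hsi : Function.Injective s := fun y y' h => by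
      apply Subtype.ext
      rw [← hs y, ← hs y', h]
    refine ⟨Set.range s, ?_, ?_⟩
    · intro x
      refine ⟨s ⟨f x, ⟨x, rfl⟩⟩, ⟨⟨_, rfl⟩, hs _⟩, ?_⟩
      rintro t' ⟨⟨y, rfl⟩, hft⟩
      congr 1
      exact Subtype.ext ((hs y).symm.trans hft)
    · apply Cardinal.mk_compl_eq_mk_compl_finite_same
      rw [Cardinal.mk_range_eq _ hsi]
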